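/- Relaxed triangle inequality for Lasso-regularized fsFGW with exponent q ≥ 1: assume every entry of the probability vector b is strictly positive. Let fsFGW_L(X,Y), fsFGW_L(Y,Z), fsFGW_L(X,Z) denote the optimal values of the Lasso-regularized fsFGW problems between the corresponding pairs of structured objects, all with the same exponent q ≥ 1, the same α ∈ [0,1], and the same λ > 0. Then fsFGW_L(X,Z) ≤ 2^{q−1} · ( fsFGW_L(X,Y) + fsFGW_L(Y,Z) ). -/

import Mathlib

/-- A probability vector: nonnegative entries summing to 1. -/
def IsProb {n : ℕ} (a : Fin n → ℝ) : Prop := (∀ i, 0 ≤ a i) ∧ ∑ i, a i = 1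

/-- Membership in the transport polytope U(a,b). -/
def InU {n m : ℕ} (a : Fin n → ℝ) (b : Fin m → ℝ) (T : Matrix (Fin n) (Fin m) ℝ) : Prop :=
  (∀ i j, 0 ≤ T i j) ∧ (∀ i, ∑ j, T i j = a i) ∧ (∀ j, ∑ i, T i j = b j)

/-- Feature score `s_r(T) = Σ_{i,j} T_{ij} |X_{ir} − Y_{jr}|^q`. -/
noncomputable def score {n m d : ℕ} (q : ℝ) (X : Matrix (Fin n) (Fin d) ℝ)
    (Y : Matrix (Fin m) (Fin d) ℝ) (T : Matrix (Fin n) (Fin m) ℝ) (r : Fin d) : ℝ :=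
  ∑ i, ∑ j, T i j * |X i r - Y j r| ^ q

/-- Gromov–Wasserstein term `GW(T) = Σ |C^X_{ii'} − C^Y_{jj'}|^q T_{ij} T_{i'j'}`. -/
noncomputable def gwTerm {n m : ℕ} (q : ℝ) (CX : Matrix (Fin n) (Fin n) ℝ)
    (CY : Matrix (Fin m) (Fin m) ℝ) (T : Matrix (Fin n) (Fin m) ℝ) : ℝ :=
  ∑ i, ∑ i', ∑ j, ∑ j', |CX i i' - CY j j'| ^ q * T i j * T i' j'

/-- Lasso-regularized fsFGW objective. -/
noncomputable def FL {n m d : ℕ} (q α lam : ℝ)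
    (CX : Matrix (Fin n) (Fin n) ℝ) (CY : Matrix (Fin m) (Fin m) ℝ)
    (X : Matrix (Fin n) (Fin d) ℝ) (Y : Matrix (Fin m) (Fin d) ℝ)
    (T : Matrix (Fin n) (Fin m) ℝ) (w : Fin d → ℝ) : ℝ :=
  (1 - α) * ∑ r, (1 - w r) * score q X Y T r + α * gwTerm q CX CY T + lam * ∑ r, w r

/-- Optimal value of the Lasso-regularized fsFGW problem between two
structured objects. -/
noncomputable def fsLVal {n m d : ℕ} (q α lam : ℝ)
    (CX : Matrix (Fin n) (Fin n) ℝ) (CY : Matrix (Fin m) (Fin m) ℝ)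
    (X : Matrix (Fin n) (Fin d) ℝ) (Y : Matrix (Fin m) (Fin d) ℝ)
    (a : Fin n → ℝ) (b : Fin m → ℝ) : ℝ :=
  sInf {v : ℝ | ∃ T w, InU a b T ∧ (∀ r, w r ∈ Set.Icc (0:ℝ) 1) ∧
    v = FL q α lam CX CY X Y T w}

/- ### Auxiliary lemmas -/

lemma pow_tri (q : ℝ) (hq : 1 ≤ q) (x y z : ℝ) :
    |x - z| ^ q ≤ (2:ℝ) ^ (q - 1) * (|x - y| ^ q + |y - z| ^ q) := by
  have h0 : (0:ℝ) ≤ q := le_trans zero_le_one hq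
  have h2 : |x - z| ^ q ≤ (|x - y| + |y - z|) ^ q :=
    Real.rpow_le_rpow (abs_nonneg _) (abs_sub_le x y z) h0
  refine h2.trans ?_
  have h := NNReal.rpow_add_le_mul_rpow_add_rpow (Real.toNNReal |x - y|) (Real.toNNReal |y - z|) hq
  have hc := NNReal.coe_le_coe.mpr h
  push_cast [NNReal.coe_rpow, Real.coe_toNNReal _ (abs_nonneg _)] at hc
  convert hc using 2

lemma sum4_comm {α β γ δ : Type*} [Fintype α] [Fintype β] [Fintype γ] [Fintype δ]
    (f : α → β → γ → δ → ℝ) :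
    ∑ k, ∑ k', ∑ j, ∑ j', f k k' j j' = ∑ j, ∑ j', ∑ k, ∑ k', f k k' j j' := by
  calc ∑ k, ∑ k', ∑ j, ∑ j', f k k' j j'
      = ∑ k, ∑ j, ∑ k', ∑ j', f k k' j j' :=
        Finset.sum_congr rfl fun k _ => Finset.sum_comm
    _ = ∑ j, ∑ k, ∑ k', ∑ j', f k k' j j' := Finset.sum_comm
    _ = ∑ j, ∑ k, ∑ j', ∑ k', f k k' j j' :=
        Finset.sum_congr rfl fun j _ => Finset.sum_congr rfl fun k _ => Finset.sum_comm
    _ = ∑ j, ∑ j', ∑ k, ∑ k', f k k' j j' :=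
        Finset.sum_congr rfl fun j _ => Finset.sum_comm

lemma eval1 {κ : Type*} [Fintype κ] (g : κ → ℝ) (C sg : ℝ)
    (hg : ∑ y, g y = sg) (hsg : sg ≠ 0) :
    ∑ y, C * (g y / sg) = C := by
  have h : ∀ y, C * (g y / sg) = (C / sg) * g y := fun y => by ring
  rw [Finset.sum_congr rfl fun y _ => h y, ← Finset.mul_sum, hg]
  field_simp

lemma eval2 {ι κ : Type*} [Fintype ι] [Fintype κ] (f : ι → ℝ) (g : κ → ℝ) (C sf sg : ℝ)
    (hf : ∑ x, f x = sf) (hg : ∑ y, g y = sg) (hsf : sf ≠ 0) (hsg : sg ≠ 0) :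
    ∑ x, ∑ y, C * (f x / sf) * (g y / sg) = C := by
  have h1 : ∀ x, ∑ y, C * (f x / sf) * (g y / sg) = C * (f x / sf) := by
    intro x
    have h : ∀ y, C * (f x / sf) * (g y / sg) = (C * (f x / sf) / sg) * g y := fun y => by ring
    rw [Finset.sum_congr rfl fun y _ => h y, ← Finset.mul_sum, hg]
    field_simp
  rw [Finset.sum_congr rfl fun x _ => h1 x]
  exact eval1 f C sf hf hsf

/-- Score bound for the glued coupling. -/
lemma score_glue_le {n m p d : ℕ} (q : ℝ) (hq : 1 ≤ q)
    (b : Fin m → ℝ) (hb : ∀ j, 0 < b j)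
    (T1 : Matrix (Fin n) (Fin m) ℝ) (T2 : Matrix (Fin m) (Fin p) ℝ)
    (h1 : ∀ i j, 0 ≤ T1 i j) (h2 : ∀ j k, 0 ≤ T2 j k)
    (h1col : ∀ j, ∑ i, T1 i j = b j) (h2row : ∀ j, ∑ k, T2 j k = b j)
    (X : Matrix (Fin n) (Fin d) ℝ) (Y : Matrix (Fin m) (Fin d) ℝ)
    (Z : Matrix (Fin p) (Fin d) ℝ) (r : Fin d) :
    score q X Z (fun i k => ∑ j, T1 i j * T2 j k / b j) r ≤
      (2:ℝ) ^ (q - 1) * (score q X Y T1 r + score q Y Z T2 r) := by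
  set c2 := (2:ℝ) ^ (q - 1) with hc2def
  have hc2 : (0:ℝ) ≤ c2 := Real.rpow_nonneg (by norm_num) _
  have hbne : ∀ j, b j ≠ 0 := fun j => (hb j).ne'
  have step1 : score q X Z (fun i k => ∑ j, T1 i j * T2 j k / b j) r
      = ∑ i, ∑ j, ∑ k, (T1 i j * T2 j k / b j) * |X i r - Z k r| ^ q := by
    unfold score
    refine Finset.sum_congr rfl fun i _ => ?_
    rw [Finset.sum_comm]
    exact Finset.sum_congr rfl fun k _ => Finset.sum_mul _ _ _
  rw [step1]
  have step2 : ∑ i, ∑ j, ∑ k, (T1 i j * T2 j k / b j) * |X i r - Z k r| ^ q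
      ≤ ∑ i, ∑ j, ∑ k, (T1 i j * T2 j k / b j) *
          (c2 * (|X i r - Y j r| ^ q + |Y j r - Z k r| ^ q)) := by
    refine Finset.sum_le_sum fun i _ => Finset.sum_le_sum fun j _ =>
      Finset.sum_le_sum fun k _ => ?_
    exact mul_le_mul_of_nonneg_left (pow_tri q hq _ _ _)
      (div_nonneg (mul_nonneg (h1 i j) (h2 j k)) (hb j).le)
  refine step2.trans_eq ?_
  have split : ∑ i, ∑ j, ∑ k, (T1 i j * T2 j k / b j) *
        (c2 * (|X i r - Y j r| ^ q + |Y j r - Z k r| ^ q))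
      = c2 * (∑ i, ∑ j, ∑ k, (T1 i j * T2 j k / b j) * |X i r - Y j r| ^ q)
        + c2 * (∑ i, ∑ j, ∑ k, (T1 i j * T2 j k / b j) * |Y j r - Z k r| ^ q) := by
    simp only [Finset.mul_sum, ← Finset.sum_add_distrib]
    refine Finset.sum_congr rfl fun i _ => Finset.sum_congr rfl fun j _ =>
      Finset.sum_congr rfl fun k _ => by ring
  rw [split]
  have part1 : ∑ i, ∑ j, ∑ k, (T1 i j * T2 j k / b j) * |X i r - Y j r| ^ q
      = score q X Y T1 r := by
    unfold score
    refine Finset.sum_congr rfl fun i _ => Finset.sum_congr rfl fun j _ => ?_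
    have h : ∀ k, (T1 i j * T2 j k / b j) * |X i r - Y j r| ^ q
        = (T1 i j * |X i r - Y j r| ^ q) * (T2 j k / b j) := fun k => by ring
    rw [Finset.sum_congr rfl fun k _ => h k]
    exact eval1 (fun k => T2 j k) _ _ (h2row j) (hbne j)
  have part2 : ∑ i, ∑ j, ∑ k, (T1 i j * T2 j k / b j) * |Y j r - Z k r| ^ q
      = score q Y Z T2 r := by
    have comm : ∑ i, ∑ j, ∑ k, (T1 i j * T2 j k / b j) * |Y j r - Z k r| ^ q
        = ∑ j, ∑ k, ∑ i, (T1 i j * T2 j k / b j) * |Y j r - Z k r| ^ q := by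
      rw [Finset.sum_comm]
      exact Finset.sum_congr rfl fun j _ => Finset.sum_comm
    rw [comm]
    unfold score
    refine Finset.sum_congr rfl fun j _ => Finset.sum_congr rfl fun k _ => ?_
    have h : ∀ i, (T1 i j * T2 j k / b j) * |Y j r - Z k r| ^ q
        = (T2 j k * |Y j r - Z k r| ^ q) * (T1 i j / b j) := fun i => by ring
    rw [Finset.sum_congr rfl fun i _ => h i]
    exact eval1 (fun i => T1 i j) _ _ (h1col j) (hbne j)
  rw [part1, part2]; ring

/-- GW bound for the glued coupling. -/
lemma gw_glue_le {n m p : ℕ} (q : ℝ) (hq : 1 ≤ q)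
    (b : Fin m → ℝ) (hb : ∀ j, 0 < b j)
    (T1 : Matrix (Fin n) (Fin m) ℝ) (T2 : Matrix (Fin m) (Fin p) ℝ)
    (h1 : ∀ i j, 0 ≤ T1 i j) (h2 : ∀ j k, 0 ≤ T2 j k)
    (h1col : ∀ j, ∑ i, T1 i j = b j) (h2row : ∀ j, ∑ k, T2 j k = b j)
    (CX : Matrix (Fin n) (Fin n) ℝ) (CY : Matrix (Fin m) (Fin m) ℝ)
    (CZ : Matrix (Fin p) (Fin p) ℝ) :
    gwTerm q CX CZ (fun i k => ∑ j, T1 i j * T2 j k / b j) ≤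
      (2:ℝ) ^ (q - 1) * (gwTerm q CX CY T1 + gwTerm q CY CZ T2) := by
  set c2 := (2:ℝ) ^ (q - 1) with hc2def
  have hc2 : (0:ℝ) ≤ c2 := Real.rpow_nonneg (by norm_num) _
  have hbne : ∀ j, b j ≠ 0 := fun j => (hb j).ne'
  -- expand the glued coupling
  have step1 : gwTerm q CX CZ (fun i k => ∑ j, T1 i j * T2 j k / b j)
      = ∑ i, ∑ i', ∑ j, ∑ j', ∑ k, ∑ k',
          |CX i i' - CZ k k'| ^ q * (T1 i j * T2 j k / b j) * (T1 i' j' * T2 j' k' / b j') := by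
    unfold gwTerm
    refine Finset.sum_congr rfl fun i _ => Finset.sum_congr rfl fun i' _ => ?_
    rw [← sum4_comm (fun k k' j j' => |CX i i' - CZ k k'| ^ q *
      (T1 i j * T2 j k / b j) * (T1 i' j' * T2 j' k' / b j'))]
    refine Finset.sum_congr rfl fun k _ => Finset.sum_congr rfl fun k' _ => ?_
    rw [mul_assoc, Finset.sum_mul_sum, Finset.mul_sum]
    refine Finset.sum_congr rfl fun j _ => ?_
    rw [Finset.mul_sum]
    exact Finset.sum_congr rfl fun j' _ => by ring
  rw [step1]
  have step2 : ∑ i, ∑ i', ∑ j, ∑ j', ∑ k, ∑ k',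
        |CX i i' - CZ k k'| ^ q * (T1 i j * T2 j k / b j) * (T1 i' j' * T2 j' k' / b j')
      ≤ ∑ i, ∑ i', ∑ j, ∑ j', ∑ k, ∑ k',
        (c2 * (|CX i i' - CY j j'| ^ q + |CY j j' - CZ k k'| ^ q)) *
          (T1 i j * T2 j k / b j) * (T1 i' j' * T2 j' k' / b j') := by
    refine Finset.sum_le_sum fun i _ => Finset.sum_le_sum fun i' _ =>
      Finset.sum_le_sum fun j _ => Finset.sum_le_sum fun j' _ =>
      Finset.sum_le_sum fun k _ => Finset.sum_le_sum fun k' _ => ?_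
    have hw1 : 0 ≤ T1 i j * T2 j k / b j :=
      div_nonneg (mul_nonneg (h1 i j) (h2 j k)) (hb j).le
    have hw2 : 0 ≤ T1 i' j' * T2 j' k' / b j' :=
      div_nonneg (mul_nonneg (h1 i' j') (h2 j' k')) (hb j').le
    exact mul_le_mul_of_nonneg_right
      (mul_le_mul_of_nonneg_right (pow_tri q hq _ _ _) hw1) hw2
  refine step2.trans_eq ?_
  have split : ∑ i, ∑ i', ∑ j, ∑ j', ∑ k, ∑ k',
        (c2 * (|CX i i' - CY j j'| ^ q + |CY j j' - CZ k k'| ^ q)) *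
          (T1 i j * T2 j k / b j) * (T1 i' j' * T2 j' k' / b j')
      = c2 * (∑ i, ∑ i', ∑ j, ∑ j', ∑ k, ∑ k',
          |CX i i' - CY j j'| ^ q * (T1 i j * T2 j k / b j) * (T1 i' j' * T2 j' k' / b j'))
        + c2 * (∑ i, ∑ i', ∑ j, ∑ j', ∑ k, ∑ k',
          |CY j j' - CZ k k'| ^ q * (T1 i j * T2 j k / b j) * (T1 i' j' * T2 j' k' / b j')) := by
    simp only [Finset.mul_sum, ← Finset.sum_add_distrib]
    refine Finset.sum_congr rfl fun i _ => Finset.sum_congr rfl fun i' _ =>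
      Finset.sum_congr rfl fun j _ => Finset.sum_congr rfl fun j' _ =>
      Finset.sum_congr rfl fun k _ => Finset.sum_congr rfl fun k' _ => by ring
  rw [split]
  have part1 : ∑ i, ∑ i', ∑ j, ∑ j', ∑ k, ∑ k',
        |CX i i' - CY j j'| ^ q * (T1 i j * T2 j k / b j) * (T1 i' j' * T2 j' k' / b j')
      = gwTerm q CX CY T1 := by
    unfold gwTerm
    refine Finset.sum_congr rfl fun i _ => Finset.sum_congr rfl fun i' _ =>
      Finset.sum_congr rfl fun j _ => Finset.sum_congr rfl fun j' _ => ?_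
    have h : ∀ k k', |CX i i' - CY j j'| ^ q * (T1 i j * T2 j k / b j) *
          (T1 i' j' * T2 j' k' / b j')
        = (|CX i i' - CY j j'| ^ q * T1 i j * T1 i' j') * (T2 j k / b j) *
            (T2 j' k' / b j') := fun k k' => by ring
    rw [Finset.sum_congr rfl fun k _ => Finset.sum_congr rfl fun k' _ => h k k']
    exact eval2 (fun k => T2 j k) (fun k' => T2 j' k') _ _ _ (h2row j) (h2row j')
      (hbne j) (hbne j')
  have part2 : ∑ i, ∑ i', ∑ j, ∑ j', ∑ k, ∑ k',
        |CY j j' - CZ k k'| ^ q * (T1 i j * T2 j k / b j) * (T1 i' j' * T2 j' k' / b j')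
      = gwTerm q CY CZ T2 := by
    have comm1 : ∑ i, ∑ i', ∑ j, ∑ j', ∑ k, ∑ k',
          |CY j j' - CZ k k'| ^ q * (T1 i j * T2 j k / b j) * (T1 i' j' * T2 j' k' / b j')
        = ∑ j, ∑ j', ∑ i, ∑ i', ∑ k, ∑ k',
          |CY j j' - CZ k k'| ^ q * (T1 i j * T2 j k / b j) * (T1 i' j' * T2 j' k' / b j') :=
      sum4_comm _
    have comm2 : ∀ (j : Fin m) (j' : Fin m), ∑ i, ∑ i', ∑ k, ∑ k',
          |CY j j' - CZ k k'| ^ q * (T1 i j * T2 j k / b j) * (T1 i' j' * T2 j' k' / b j')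
        = ∑ k, ∑ k', ∑ i, ∑ i',
          |CY j j' - CZ k k'| ^ q * (T1 i j * T2 j k / b j) * (T1 i' j' * T2 j' k' / b j') :=
      fun j j' => sum4_comm _
    rw [comm1]
    refine Eq.trans (Finset.sum_congr rfl fun j _ =>
      Finset.sum_congr rfl fun j' _ => comm2 j j') ?_
    unfold gwTerm
    refine Finset.sum_congr rfl fun j _ => ?_
    refine Finset.sum_congr rfl fun j' _ => ?_
    refine Finset.sum_congr rfl fun k _ => ?_
    refine Finset.sum_congr rfl fun k' _ => ?_
    have h : ∀ i i', |CY j j' - CZ k k'| ^ q * (T1 i j * T2 j k / b j) *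
          (T1 i' j' * T2 j' k' / b j')
        = (|CY j j' - CZ k k'| ^ q * T2 j k * T2 j' k') * (T1 i j / b j) *
            (T1 i' j' / b j') := fun i i' => by ring
    rw [Finset.sum_congr rfl fun i _ => Finset.sum_congr rfl fun i' _ => h i i']
    exact eval2 (fun i => T1 i j) (fun i' => T1 i' j') _ _ _ (h1col j) (h1col j')
      (hbne j) (hbne j')
  rw [part1, part2]; ring

lemma score_nonneg {n m d : ℕ} (q : ℝ) (X : Matrix (Fin n) (Fin d) ℝ)
    (Y : Matrix (Fin m) (Fin d) ℝ) (T : Matrix (Fin n) (Fin m) ℝ)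
    (hT : ∀ i j, 0 ≤ T i j) (r : Fin d) : 0 ≤ score q X Y T r := by
  refine Finset.sum_nonneg fun i _ => Finset.sum_nonneg fun j _ =>
    mul_nonneg (hT i j) (Real.rpow_nonneg (abs_nonneg _) _)

lemma gw_nonneg {n m : ℕ} (q : ℝ) (CX : Matrix (Fin n) (Fin n) ℝ)
    (CY : Matrix (Fin m) (Fin m) ℝ) (T : Matrix (Fin n) (Fin m) ℝ)
    (hT : ∀ i j, 0 ≤ T i j) : 0 ≤ gwTerm q CX CY T := by
  refine Finset.sum_nonneg fun i _ => Finset.sum_nonneg fun i' _ =>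
    Finset.sum_nonneg fun j _ => Finset.sum_nonneg fun j' _ =>
    mul_nonneg (mul_nonneg (Real.rpow_nonneg (abs_nonneg _) _) (hT i j)) (hT i' j')

lemma FL_nonneg {n m d : ℕ} (q α lam : ℝ) (hα0 : 0 ≤ α) (hα1 : α ≤ 1) (hlam : 0 ≤ lam)
    (CX : Matrix (Fin n) (Fin n) ℝ) (CY : Matrix (Fin m) (Fin m) ℝ)
    (X : Matrix (Fin n) (Fin d) ℝ) (Y : Matrix (Fin m) (Fin d) ℝ)
    (T : Matrix (Fin n) (Fin m) ℝ) (w : Fin d → ℝ)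
    (hT : ∀ i j, 0 ≤ T i j) (hw : ∀ r, w r ∈ Set.Icc (0:ℝ) 1) :
    0 ≤ FL q α lam CX CY X Y T w := by
  unfold FL
  have h1 : 0 ≤ ∑ r, (1 - w r) * score q X Y T r :=
    Finset.sum_nonneg fun r _ => mul_nonneg (by linarith [(hw r).2])
      (score_nonneg q X Y T hT r)
  have h2 : 0 ≤ ∑ r : Fin d, w r := Finset.sum_nonneg fun r _ => (hw r).1
  have h3 := gw_nonneg q CX CY T hT
  have := mul_nonneg (by linarith : (0:ℝ) ≤ 1 - α) h1
  have := mul_nonneg hα0 h3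
  have := mul_nonneg hlam h2
  linarith

/-- The key comparison for the glued coupling and the max weights. -/
lemma FL_glue_le {n m p d : ℕ} (q α lam : ℝ) (hq : 1 ≤ q)
    (hα0 : 0 ≤ α) (hα1 : α ≤ 1) (hlam : 0 ≤ lam)
    (b : Fin m → ℝ) (hb : ∀ j, 0 < b j)
    (CX : Matrix (Fin n) (Fin n) ℝ) (CY : Matrix (Fin m) (Fin m) ℝ)
    (CZ : Matrix (Fin p) (Fin p) ℝ)
    (X : Matrix (Fin n) (Fin d) ℝ) (Y : Matrix (Fin m) (Fin d) ℝ)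
    (Z : Matrix (Fin p) (Fin d) ℝ)
    (T1 : Matrix (Fin n) (Fin m) ℝ) (T2 : Matrix (Fin m) (Fin p) ℝ)
    (h1 : ∀ i j, 0 ≤ T1 i j) (h2 : ∀ j k, 0 ≤ T2 j k)
    (h1col : ∀ j, ∑ i, T1 i j = b j) (h2row : ∀ j, ∑ k, T2 j k = b j)
    (w1 w2 : Fin d → ℝ)
    (hw1 : ∀ r, w1 r ∈ Set.Icc (0:ℝ) 1) (hw2 : ∀ r, w2 r ∈ Set.Icc (0:ℝ) 1) :
    FL q α lam CX CZ X Z (fun i k => ∑ j, T1 i j * T2 j k / b j)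
        (fun r => max (w1 r) (w2 r)) ≤
      (2:ℝ) ^ (q - 1) *
        (FL q α lam CX CY X Y T1 w1 + FL q α lam CY CZ Y Z T2 w2) := by
  set c2 := (2:ℝ) ^ (q - 1) with hc2def
  have hc2 : (0:ℝ) ≤ c2 := Real.rpow_nonneg (by norm_num) _
  have hc21 : (1:ℝ) ≤ c2 := by
    have := Real.rpow_le_rpow_of_exponent_le (by norm_num : (1:ℝ) ≤ 2)
      (by linarith : (0:ℝ) ≤ q - 1)
    simpa using this
  -- score part
  have hsc : ∀ r, (1 - max (w1 r) (w2 r)) *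
        score q X Z (fun i k => ∑ j, T1 i j * T2 j k / b j) r
      ≤ c2 * ((1 - w1 r) * score q X Y T1 r + (1 - w2 r) * score q Y Z T2 r) := by
    intro r
    have hs := score_glue_le q hq b hb T1 T2 h1 h2 h1col h2row X Y Z r
    have hmax1 : (0:ℝ) ≤ 1 - max (w1 r) (w2 r) := by
      rcases max_cases (w1 r) (w2 r) with ⟨h, _⟩ | ⟨h, _⟩ <;> rw [h]
      · linarith [(hw1 r).2]
      · linarith [(hw2 r).2]
    have hs1 := score_nonneg q X Y T1 h1 r
    have hs2 := score_nonneg q Y Z T2 h2 r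
    calc (1 - max (w1 r) (w2 r)) *
          score q X Z (fun i k => ∑ j, T1 i j * T2 j k / b j) r
        ≤ (1 - max (w1 r) (w2 r)) * (c2 * (score q X Y T1 r + score q Y Z T2 r)) :=
          mul_le_mul_of_nonneg_left hs hmax1
      _ = c2 * ((1 - max (w1 r) (w2 r)) * score q X Y T1 r +
            (1 - max (w1 r) (w2 r)) * score q Y Z T2 r) := by ring
      _ ≤ c2 * ((1 - w1 r) * score q X Y T1 r + (1 - w2 r) * score q Y Z T2 r) := by
          have e1 : (1 - max (w1 r) (w2 r)) * score q X Y T1 r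
              ≤ (1 - w1 r) * score q X Y T1 r :=
            mul_le_mul_of_nonneg_right (by linarith [le_max_left (w1 r) (w2 r)]) hs1
          have e2 : (1 - max (w1 r) (w2 r)) * score q Y Z T2 r
              ≤ (1 - w2 r) * score q Y Z T2 r :=
            mul_le_mul_of_nonneg_right (by linarith [le_max_right (w1 r) (w2 r)]) hs2
          exact mul_le_mul_of_nonneg_left (by linarith) hc2
  have hscsum : ∑ r, (1 - max (w1 r) (w2 r)) *
        score q X Z (fun i k => ∑ j, T1 i j * T2 j k / b j) r
      ≤ c2 * (∑ r, (1 - w1 r) * score q X Y T1 r) +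
        c2 * (∑ r, (1 - w2 r) * score q Y Z T2 r) := by
    calc ∑ r, (1 - max (w1 r) (w2 r)) *
          score q X Z (fun i k => ∑ j, T1 i j * T2 j k / b j) r
        ≤ ∑ r, c2 * ((1 - w1 r) * score q X Y T1 r + (1 - w2 r) * score q Y Z T2 r) :=
          Finset.sum_le_sum fun r _ => hsc r
      _ = c2 * (∑ r, (1 - w1 r) * score q X Y T1 r) +
          c2 * (∑ r, (1 - w2 r) * score q Y Z T2 r) := by
          simp only [Finset.mul_sum, ← Finset.sum_add_distrib]
          exact Finset.sum_congr rfl fun r _ => by ring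
  -- gw part
  have hgw := gw_glue_le q hq b hb T1 T2 h1 h2 h1col h2row CX CY CZ
  -- lasso part
  have hlas : ∑ r, max (w1 r) (w2 r) ≤ c2 * (∑ r, w1 r) + c2 * (∑ r, w2 r) := by
    have h0 : ∑ r, max (w1 r) (w2 r) ≤ ∑ r, (w1 r + w2 r) := by
      refine Finset.sum_le_sum fun r _ => ?_
      rcases max_cases (w1 r) (w2 r) with ⟨h, _⟩ | ⟨h, _⟩ <;> rw [h]
      · linarith [(hw2 r).1]
      · linarith [(hw1 r).1]
    have h1' : ∑ r, (w1 r + w2 r) = (∑ r, w1 r) + ∑ r, w2 r := Finset.sum_add_distrib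
    have h2' : (0:ℝ) ≤ (∑ r, w1 r) + ∑ r, w2 r := by
      have := Finset.sum_nonneg fun r (_ : r ∈ Finset.univ) => (hw1 r).1
      have := Finset.sum_nonneg fun r (_ : r ∈ Finset.univ) => (hw2 r).1
      linarith
    nlinarith [h0, h1', h2']
  -- assemble
  unfold FL
  have hb1 : (1 - α) * ∑ r, (1 - max (w1 r) (w2 r)) *
        score q X Z (fun i k => ∑ j, T1 i j * T2 j k / b j) r
      ≤ (1 - α) * (c2 * (∑ r, (1 - w1 r) * score q X Y T1 r) +
          c2 * (∑ r, (1 - w2 r) * score q Y Z T2 r)) :=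
    mul_le_mul_of_nonneg_left hscsum (by linarith)
  have hb2 : α * gwTerm q CX CZ (fun i k => ∑ j, T1 i j * T2 j k / b j)
      ≤ α * (c2 * (gwTerm q CX CY T1 + gwTerm q CY CZ T2)) :=
    mul_le_mul_of_nonneg_left hgw hα0
  have hb3 : lam * ∑ r, max (w1 r) (w2 r)
      ≤ lam * (c2 * (∑ r, w1 r) + c2 * (∑ r, w2 r)) :=
    mul_le_mul_of_nonneg_left hlas hlam
  nlinarith [hb1, hb2, hb3]

/-- relaxed triangle inequality (factor `2^{q−1}`) for
Lasso-regularized fsFGW with exponent `q ≥ 1`. -/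
theorem lasso_fsFGW_relaxed_triangle (n m p d : ℕ)
    (hn : 1 ≤ n) (hm : 1 ≤ m) (hp : 1 ≤ p) (hd : 1 ≤ d)
    (q : ℝ) (hq : 1 ≤ q)
    (α lam : ℝ) (hα : α ∈ Set.Icc (0:ℝ) 1) (hlam : 0 < lam)
    (a : Fin n → ℝ) (b : Fin m → ℝ) (c : Fin p → ℝ)
    (ha : IsProb a) (hb : IsProb b) (hc : IsProb c) (hbpos : ∀ j, 0 < b j)
    (CX : Matrix (Fin n) (Fin n) ℝ) (CY : Matrix (Fin m) (Fin m) ℝ)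
    (CZ : Matrix (Fin p) (Fin p) ℝ)
    (X : Matrix (Fin n) (Fin d) ℝ) (Y : Matrix (Fin m) (Fin d) ℝ)
    (Z : Matrix (Fin p) (Fin d) ℝ) :
    fsLVal q α lam CX CZ X Z a c ≤
      (2:ℝ) ^ (q - 1) *
        (fsLVal q α lam CX CY X Y a b + fsLVal q α lam CY CZ Y Z b c) := by
  obtain ⟨hα0, hα1⟩ := hα
  set c2 := (2:ℝ) ^ (q - 1) with hc2def
  have hc2pos : (0:ℝ) < c2 := Real.rpow_pos_of_pos (by norm_num) _
  set S1 := {v : ℝ | ∃ T w, InU a b T ∧ (∀ r, w r ∈ Set.Icc (0:ℝ) 1) ∧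
    v = FL q α lam CX CY X Y T w} with hS1
  set S2 := {v : ℝ | ∃ T w, InU b c T ∧ (∀ r, w r ∈ Set.Icc (0:ℝ) 1) ∧
    v = FL q α lam CY CZ Y Z T w} with hS2
  set S3 := {v : ℝ | ∃ T w, InU a c T ∧ (∀ r, w r ∈ Set.Icc (0:ℝ) 1) ∧
    v = FL q α lam CX CZ X Z T w} with hS3
  -- nonemptiness via product couplings
  have hprod : ∀ {n' m' : ℕ} (a' : Fin n' → ℝ) (b' : Fin m' → ℝ),
      IsProb a' → IsProb b' → InU a' b' (fun i j => a' i * b' j) := by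
    intro n' m' a' b' ha' hb'
    refine ⟨fun i j => mul_nonneg (ha'.1 i) (hb'.1 j), fun i => ?_, fun j => ?_⟩
    · rw [← Finset.mul_sum, hb'.2, mul_one]
    · rw [← Finset.sum_mul, ha'.2, one_mul]
  have hne1 : S1.Nonempty :=
    ⟨_, ⟨_, fun _ => 0, hprod a b ha hb, fun r => ⟨le_refl _, zero_le_one⟩, rfl⟩⟩
  have hne2 : S2.Nonempty :=
    ⟨_, ⟨_, fun _ => 0, hprod b c hb hc, fun r => ⟨le_refl _, zero_le_one⟩, rfl⟩⟩
  -- lower bounds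
  have hbdd1 : BddBelow S1 := by
    refine ⟨0, fun v hv => ?_⟩
    obtain ⟨T, w, hT, hw, rfl⟩ := hv
    exact FL_nonneg q α lam hα0 hα1 hlam.le CX CY X Y T w hT.1 hw
  have hbdd2 : BddBelow S2 := by
    refine ⟨0, fun v hv => ?_⟩
    obtain ⟨T, w, hT, hw, rfl⟩ := hv
    exact FL_nonneg q α lam hα0 hα1 hlam.le CY CZ Y Z T w hT.1 hw
  have hbdd3 : BddBelow S3 := by
    refine ⟨0, fun v hv => ?_⟩
    obtain ⟨T, w, hT, hw, rfl⟩ := hv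
    exact FL_nonneg q α lam hα0 hα1 hlam.le CX CZ X Z T w hT.1 hw
  -- key pairwise bound
  have key : ∀ v1 ∈ S1, ∀ v2 ∈ S2, fsLVal q α lam CX CZ X Z a c ≤ c2 * (v1 + v2) := by
    rintro v1 ⟨T1, w1, hT1, hw1, rfl⟩ v2 ⟨T2, w2, hT2, hw2, rfl⟩
    have hbne : ∀ j, b j ≠ 0 := fun j => (hbpos j).ne'
    set T : Matrix (Fin n) (Fin p) ℝ := fun i k => ∑ j, T1 i j * T2 j k / b j with hTdef
    have hTU : InU a c T := by
      refine ⟨fun i k => Finset.sum_nonneg fun j _ =>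
        div_nonneg (mul_nonneg (hT1.1 i j) (hT2.1 j k)) (hbpos j).le, fun i => ?_, fun k => ?_⟩
      · rw [Finset.sum_comm]
        have : ∀ j, ∑ k, T1 i j * T2 j k / b j = T1 i j := by
          intro j
          have h : ∀ k, T1 i j * T2 j k / b j = T1 i j * (T2 j k / b j) := fun k => by ring
          rw [Finset.sum_congr rfl fun k _ => h k]
          exact eval1 (fun k => T2 j k) _ _ (hT2.2.1 j) (hbne j)
        rw [Finset.sum_congr rfl fun j _ => this j, hT1.2.1 i]
      · rw [Finset.sum_comm]
        have : ∀ j, ∑ i, T1 i j * T2 j k / b j = T2 j k := by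
          intro j
          have h : ∀ i, T1 i j * T2 j k / b j = T2 j k * (T1 i j / b j) := fun i => by ring
          rw [Finset.sum_congr rfl fun i _ => h i]
          exact eval1 (fun i => T1 i j) _ _ (hT1.2.2 j) (hbne j)
        rw [Finset.sum_congr rfl fun j _ => this j, hT2.2.2 k]
    have hwmem : ∀ r, max (w1 r) (w2 r) ∈ Set.Icc (0:ℝ) 1 :=
      fun r => ⟨le_trans (hw1 r).1 (le_max_left _ _), max_le (hw1 r).2 (hw2 r).2⟩
    have hmem : FL q α lam CX CZ X Z T (fun r => max (w1 r) (w2 r)) ∈ S3 :=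
      ⟨T, fun r => max (w1 r) (w2 r), hTU, hwmem, rfl⟩
    have hle : fsLVal q α lam CX CZ X Z a c ≤
        FL q α lam CX CZ X Z T (fun r => max (w1 r) (w2 r)) := csInf_le hbdd3 hmem
    refine hle.trans ?_
    exact FL_glue_le q α lam hq hα0 hα1 hlam.le b hbpos CX CY CZ X Y Z T1 T2
      hT1.1 hT2.1 hT1.2.2 hT2.2.1 w1 w2 hw1 hw2
  -- pass to infima
  have step1 : ∀ v1 ∈ S1, fsLVal q α lam CX CZ X Z a c ≤ c2 * (v1 + sInf S2) := by
    intro v1 hv1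
    have h : ∀ v2 ∈ S2, fsLVal q α lam CX CZ X Z a c / c2 - v1 ≤ v2 := by
      intro v2 hv2
      have := key v1 hv1 v2 hv2
      rw [sub_le_iff_le_add, div_le_iff₀ hc2pos]
      nlinarith
    have := le_csInf hne2 h
    rw [sub_le_iff_le_add, div_le_iff₀ hc2pos] at this
    nlinarith
  have h : ∀ v1 ∈ S1, fsLVal q α lam CX CZ X Z a c / c2 - sInf S2 ≤ v1 := by
    intro v1 hv1
    have := step1 v1 hv1
    rw [sub_le_iff_le_add, div_le_iff₀ hc2pos]
    nlinarith
  have hfin := le_csInf hne1 h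
  rw [sub_le_iff_le_add, div_le_iff₀ hc2pos] at hfin
  have e1 : fsLVal q α lam CX CY X Y a b = sInf S1 := rfl
  have e2 : fsLVal q α lam CY CZ Y Z b c = sInf S2 := rfl
  rw [e1, e2]
  nlinarith
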